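/- If a hypothesis class H has effective width w(H) > 1, then for all k ≤ T, M*(H, T, k) = Ω(√(T(k+1))). -/

import Mathlib

/-- `W1Shatters H d` : `H` shatters a width-1 tree of depth `d` (a perfect binary tree
truncated below the first right edge of each branch): at each node some `h ∈ H` realizes
the branch ending with the right edge, and the `x → 0` restriction shatters the left
subtree. -/
inductive W1Shatters {X : Type*} : Set (X → Bool) → ℕ → Prop
  | zero (H : Set (X → Bool)) (hne : H.Nonempty) : W1Shatters H 0
  | succ (H : Set (X → Bool)) (d : ℕ) (x : X)
      (hr : ∃ h ∈ H, h x = true)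
      (hl : W1Shatters {h ∈ H | h x = false} d) : W1Shatters H (d + 1)

/-- A deterministic apple tasting learner for a hypothesis class: it maps the feedback
history (instances together with the revealed label when the learner predicted `1`)
and the current instance to a prediction. -/
def ConceptLearner (X : Type) : Type := List (X × Option Bool) → X → Bool

/-- The feedback history produced by running learner `Lrn` on instances `x` and true
labels `y` under apple tasting feedback. -/
def histC (X : Type) (Lrn : ConceptLearner X) (x : ℕ → X) (y : ℕ → Bool) :
    ℕ → List (X × Option Bool)
  | 0 => []
  | t + 1 =>
      histC X Lrn x y t ++
        [(x t, if Lrn (histC X Lrn x y t) (x t) = true then some (y t) else none)]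

/-- The learner's prediction in round `t`. -/
def predC (X : Type) (Lrn : ConceptLearner X) (x : ℕ → X) (y : ℕ → Bool) (t : ℕ) : Bool :=
  Lrn (histC X Lrn x y t) (x t)

/-- The number of mistakes made by the learner during the first `T` rounds. -/
def mistakesC (X : Type) (Lrn : ConceptLearner X) (x : ℕ → X) (y : ℕ → Bool) (T : ℕ) : ℕ :=
  ((Finset.range T).filter (fun t => predC X Lrn x y t ≠ y t)).card

namespace W1LB

/-- Extract an infinite "branch" from a width-1 shattered tree: a sequence of instances
`xs` together with hypotheses `hs i` labelling `xs j` negatively for `j < i` and `xs i`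
positively. -/
lemma branch_exists {X : Type} {H : Set (X → Bool)} {d : ℕ} (h : W1Shatters H d)
    (hd : 0 < d) :
    ∃ (xs : ℕ → X) (hs : ℕ → (X → Bool)), ∀ i < d,
      hs i ∈ H ∧ hs i (xs i) = true ∧ ∀ j < i, hs i (xs j) = false := by
  induction h with
  | zero H hne => exact absurd hd (lt_irrefl 0)
  | succ H d x hr hl ih =>
      obtain ⟨h0, h0H, h0x⟩ := hr
      rcases Nat.eq_zero_or_pos d with hd0 | hdpos
      · refine ⟨fun _ => x, fun _ => h0, ?_⟩
        intro i hi
        subst hd0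
        interval_cases i
        exact ⟨h0H, h0x, by omega⟩
      · obtain ⟨xs', hs', hbr'⟩ := ih hdpos
        refine ⟨fun n => Nat.rec x (fun m _ => xs' m) n,
                fun n => Nat.rec h0 (fun m _ => hs' m) n, ?_⟩
        intro i hi
        cases i with
        | zero => exact ⟨h0H, h0x, by omega⟩
        | succ i' =>
            have hi' : i' < d := by omega
            obtain ⟨hmem, htrue, hfalse⟩ := hbr' i' hi'
            have hmem' := hmem
            simp only [Set.mem_setOf_eq, Set.mem_sep_iff] at hmem'
            refine ⟨hmem'.1, htrue, ?_⟩
            intro j hj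
            cases j with
            | zero => exact hmem'.2
            | succ j' => exact hfalse j' (by omega)

/-- The adversary's simulation state: feedback history, current branch node (`seg`),
number of punished predict-1 rounds in the current segment (`pc`), and number of
predict-0 rounds in the current segment (`zc`). -/
structure St (X : Type) where
  hist : List (X × Option Bool)
  seg : ℕ
  pc : ℕ
  zc : ℕ

variable {X : Type} (Lrn : ConceptLearner X) (xs : ℕ → X) (k : ℕ)

/-- One round of the adversary's simulation: present `xs seg`; if the learner predicts 1,
punish it with label 0, advancing to the next branch node after `k+1` punishments;
otherwise record a predict-0 round. -/
def step (s : St X) : St X :=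
  if Lrn s.hist (xs s.seg) = true then
    if s.pc = k then ⟨s.hist ++ [(xs s.seg, some false)], s.seg + 1, 0, 0⟩
    else ⟨s.hist ++ [(xs s.seg, some false)], s.seg, s.pc + 1, s.zc⟩
  else ⟨s.hist ++ [(xs s.seg, none)], s.seg, s.pc, s.zc + 1⟩

def run : ℕ → St X
  | 0 => ⟨[], 0, 0, 0⟩
  | t + 1 => step Lrn xs k (run t)

/-- the learner's prediction in round `t` of the simulated run -/
def pr (t : ℕ) : Bool := Lrn (run Lrn xs k t).hist (xs (run Lrn xs k t).seg)

lemma run_succ (t : ℕ) : run Lrn xs k (t + 1) = step Lrn xs k (run Lrn xs k t) := rfl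

lemma step_false {t : ℕ} (hp : pr Lrn xs k t = false) :
    run Lrn xs k (t+1) = ⟨(run Lrn xs k t).hist ++ [(xs (run Lrn xs k t).seg, none)],
      (run Lrn xs k t).seg, (run Lrn xs k t).pc, (run Lrn xs k t).zc + 1⟩ := by
  rw [run_succ, step]; simp only [pr] at hp; rw [if_neg (by simp [hp])]

lemma step_true_adv {t : ℕ} (hp : pr Lrn xs k t = true) (hk : (run Lrn xs k t).pc = k) :
    run Lrn xs k (t+1) = ⟨(run Lrn xs k t).hist ++ [(xs (run Lrn xs k t).seg, some false)],
      (run Lrn xs k t).seg + 1, 0, 0⟩ := by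
  rw [run_succ, step]; simp only [pr] at hp; rw [if_pos hp, if_pos hk]

lemma step_true_nadv {t : ℕ} (hp : pr Lrn xs k t = true) (hk : ¬ (run Lrn xs k t).pc = k) :
    run Lrn xs k (t+1) = ⟨(run Lrn xs k t).hist ++ [(xs (run Lrn xs k t).seg, some false)],
      (run Lrn xs k t).seg, (run Lrn xs k t).pc + 1, (run Lrn xs k t).zc⟩ := by
  rw [run_succ, step]; simp only [pr] at hp; rw [if_pos hp, if_neg hk]

lemma seg_mono : Monotone fun t => (run Lrn xs k t).seg := by
  apply monotone_nat_of_le_succ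
  intro t
  cases hp : pr Lrn xs k t with
  | false => rw [step_false Lrn xs k hp]
  | true =>
      by_cases hk : (run Lrn xs k t).pc = k
      · rw [step_true_adv Lrn xs k hp hk]; exact Nat.le_succ _
      · rw [step_true_nadv Lrn xs k hp hk]

lemma pc_le (t : ℕ) : (run Lrn xs k t).pc ≤ k := by
  induction t with
  | zero => exact Nat.zero_le _
  | succ t ih =>
      cases hp : pr Lrn xs k t with
      | false => rw [step_false Lrn xs k hp]; exact ih
      | true =>
          by_cases hk : (run Lrn xs k t).pc = k
          · rw [step_true_adv Lrn xs k hp hk]; exact Nat.zero_le _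
          · rw [step_true_nadv Lrn xs k hp hk]; simp only; omega

/-- counting predict-1 rounds: each completed segment has exactly `k+1` of them -/
lemma count_pred (t : ℕ) :
    ((Finset.range t).filter (fun r => pr Lrn xs k r = true)).card
      = (k+1) * (run Lrn xs k t).seg + (run Lrn xs k t).pc := by
  induction t with
  | zero => simp [run]
  | succ t ih =>
      rw [Finset.range_add_one, Finset.filter_insert]
      cases hp : pr Lrn xs k t with
      | false => rw [if_neg (by simp), step_false Lrn xs k hp, ih]
      | true =>
          rw [if_pos rfl, Finset.card_insert_of_notMem (by simp), ih]
          by_cases hk : (run Lrn xs k t).pc = k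
          · rw [step_true_adv Lrn xs k hp hk]; simp only
            have : (k+1) * ((run Lrn xs k t).seg + 1)
                = (k+1) * (run Lrn xs k t).seg + (k+1) := by ring
            omega
          · rw [step_true_nadv Lrn xs k hp hk]; simp only
            have := pc_le Lrn xs k t
            omega

/-- `zc` is at most the number of predict-0 rounds in the current segment -/
lemma zc_le_count (t : ℕ) :
    (run Lrn xs k t).zc ≤ ((Finset.range t).filter
      (fun r => (run Lrn xs k r).seg = (run Lrn xs k t).seg ∧ pr Lrn xs k r = false)).card := by
  induction t with
  | zero => simp [run]
  | succ t ih =>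
      cases hp : pr Lrn xs k t with
      | false =>
          have hseg : (run Lrn xs k (t+1)).seg = (run Lrn xs k t).seg := by
            rw [step_false Lrn xs k hp]
          have hzc : (run Lrn xs k (t+1)).zc = (run Lrn xs k t).zc + 1 := by
            rw [step_false Lrn xs k hp]
          rw [Finset.range_add_one, Finset.filter_insert,
            if_pos (⟨hseg.symm, hp⟩ : (run Lrn xs k t).seg = (run Lrn xs k (t+1)).seg
              ∧ pr Lrn xs k t = false),
            Finset.card_insert_of_notMem (by simp), hzc]
          simp only [hseg]
          omega
      | true =>
          by_cases hk : (run Lrn xs k t).pc = k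
          · have : (run Lrn xs k (t+1)).zc = 0 := by rw [step_true_adv Lrn xs k hp hk]
            rw [this]; exact Nat.zero_le _
          · have hseg : (run Lrn xs k (t+1)).seg = (run Lrn xs k t).seg := by
              rw [step_true_nadv Lrn xs k hp hk]
            have hzc : (run Lrn xs k (t+1)).zc = (run Lrn xs k t).zc := by
              rw [step_true_nadv Lrn xs k hp hk]
            rw [Finset.range_add_one, Finset.filter_insert, if_neg (by simp [hp]), hzc]
            simp only [hseg]
            exact ih

/-- the number of predict-1 rounds in the current segment is at most `pc` -/
lemma count_seg_pred_le_pc (t : ℕ) :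
    ((Finset.range t).filter
      (fun r => (run Lrn xs k r).seg = (run Lrn xs k t).seg ∧ pr Lrn xs k r = true)).card
      ≤ (run Lrn xs k t).pc := by
  induction t with
  | zero => simp [run]; rfl
  | succ t ih =>
      cases hp : pr Lrn xs k t with
      | false =>
          have hseg : (run Lrn xs k (t+1)).seg = (run Lrn xs k t).seg := by
            rw [step_false Lrn xs k hp]
          have hpc : (run Lrn xs k (t+1)).pc = (run Lrn xs k t).pc := by
            rw [step_false Lrn xs k hp]
          rw [Finset.range_add_one, Finset.filter_insert, if_neg (by simp [hp]), hpc]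
          simp only [hseg]
          exact ih
      | true =>
          by_cases hk : (run Lrn xs k t).pc = k
          · have hseg : (run Lrn xs k (t+1)).seg = (run Lrn xs k t).seg + 1 := by
              rw [step_true_adv Lrn xs k hp hk]
            have hemp : ∀ r ∈ Finset.range (t+1),
                ¬ ((run Lrn xs k r).seg = (run Lrn xs k (t+1)).seg ∧ pr Lrn xs k r = true) := by
              intro r hr
              have : (run Lrn xs k r).seg ≤ (run Lrn xs k t).seg :=
                seg_mono Lrn xs k (Nat.lt_succ_iff.mp (Finset.mem_range.mp hr))
              rw [hseg]
              intro hcon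
              omega
            rw [Finset.filter_false_of_mem hemp]
            simp
          · have hseg : (run Lrn xs k (t+1)).seg = (run Lrn xs k t).seg := by
              rw [step_true_nadv Lrn xs k hp hk]
            have hpc : (run Lrn xs k (t+1)).pc = (run Lrn xs k t).pc + 1 := by
              rw [step_true_nadv Lrn xs k hp hk]
            rw [Finset.range_add_one, Finset.filter_insert,
              if_pos (⟨hseg.symm, hp⟩ : (run Lrn xs k t).seg = (run Lrn xs k (t+1)).seg
                ∧ pr Lrn xs k t = true),
              Finset.card_insert_of_notMem (by simp), hpc]
            simp only [hseg]
            omega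

/-- time bound: while `zc` stays below `B`, every segment has length at most `B + k` -/
lemma time_bound (B : ℕ) (t : ℕ) (hz : ∀ r < t, (run Lrn xs k r).zc < B) :
    t ≤ (run Lrn xs k t).seg * (B + k) + (run Lrn xs k t).pc + (run Lrn xs k t).zc := by
  induction t with
  | zero => simp
  | succ t ih =>
      have ih' := ih (fun r hr => hz r (by omega))
      have hzt := hz t (by omega)
      cases hp : pr Lrn xs k t with
      | false => rw [step_false Lrn xs k hp]; simp only; omega
      | true =>
          by_cases hk : (run Lrn xs k t).pc = k
          · rw [step_true_adv Lrn xs k hp hk]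
            simp only
            have : (run Lrn xs k t).seg * (B+k) + k + B ≤ ((run Lrn xs k t).seg + 1) * (B+k) := by
              ring_nf; omega
            omega
          · rw [step_true_nadv Lrn xs k hp hk]; simp only; omega

/-- the history of the simulated run is the true history, provided the instances agree
and the labels are `false` on predict-1 rounds -/
lemma hist_eq (x : ℕ → X) (y : ℕ → Bool) (n : ℕ)
    (hx : ∀ t < n, x t = xs (run Lrn xs k t).seg)
    (hy : ∀ t < n, pr Lrn xs k t = true → y t = false) :
    ∀ t, t ≤ n → histC X Lrn x y t = (run Lrn xs k t).hist := by
  intro t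
  induction t with
  | zero => intro _; rfl
  | succ t ih =>
      intro ht
      have htn : t < n := by omega
      simp only [histC]
      rw [ih (by omega), hx t htn]
      cases hp : pr Lrn xs k t with
      | false =>
          have hp' : Lrn (run Lrn xs k t).hist (xs (run Lrn xs k t).seg) = false := hp
          rw [if_neg (by simp [hp']), step_false Lrn xs k hp]
      | true =>
          have hp' : Lrn (run Lrn xs k t).hist (xs (run Lrn xs k t).seg) = true := hp
          rw [if_pos hp', hy t htn hp]
          by_cases hk : (run Lrn xs k t).pc = k
          · rw [step_true_adv Lrn xs k hp hk]
          · rw [step_true_nadv Lrn xs k hp hk]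

variable (T B : ℕ)

lemma exQ : ∃ t, T ≤ t ∨ B ≤ (run Lrn xs k t).zc := ⟨T, Or.inl le_rfl⟩

/-- the first time the current segment accumulates `B` predict-0 rounds (or `T`) -/
def tstar : ℕ := Nat.find (exQ Lrn xs k T B)

lemma tstar_le : tstar Lrn xs k T B ≤ T := Nat.find_le (Or.inl le_rfl)

lemma tstar_spec : T ≤ tstar Lrn xs k T B ∨ B ≤ (run Lrn xs k (tstar Lrn xs k T B)).zc :=
  Nat.find_spec (exQ Lrn xs k T B)

lemma tstar_min : ∀ r < tstar Lrn xs k T B, r < T ∧ (run Lrn xs k r).zc < B := by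
  intro r hr
  have := Nat.find_min (exQ Lrn xs k T B) hr
  push_neg at this
  exact this

/-- the harvested segment -/
def istar : ℕ := (run Lrn xs k (tstar Lrn xs k T B)).seg

/-- final instance sequence: follow the simulation until `tstar`, then repeat `xs istar` -/
def xF : ℕ → X := fun t =>
  if t < tstar Lrn xs k T B then xs (run Lrn xs k t).seg else xs (istar Lrn xs k T B)

/-- final labels: `0` on punished predict-1 rounds and on segments before `istar`;
`1` on predict-0 rounds of segment `istar` and from `tstar` onwards -/
def yF : ℕ → Bool := fun t =>
  if t < tstar Lrn xs k T B then
    (if (run Lrn xs k t).seg = istar Lrn xs k T B ∧ pr Lrn xs k t = false then true else false)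
  else true

lemma histF_eq : ∀ t, t ≤ tstar Lrn xs k T B →
    histC X Lrn (xF Lrn xs k T B) (yF Lrn xs k T B) t = (run Lrn xs k t).hist := by
  apply hist_eq
  · intro t ht; simp only [xF, if_pos ht]
  · intro t ht hp
    simp only [yF, if_pos ht]
    rw [if_neg]
    rintro ⟨-, h2⟩
    rw [hp] at h2
    cases h2

lemma predF_eq : ∀ t < tstar Lrn xs k T B,
    predC X Lrn (xF Lrn xs k T B) (yF Lrn xs k T B) t = pr Lrn xs k t := by
  intro t ht
  unfold predC pr
  rw [histF_eq Lrn xs k T B t ht.le]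
  congr 1
  simp only [xF, if_pos ht]

/-- every punished predict-1 round and every predict-0 round of the final segment
is a mistake -/
lemma mistakes_ge :
    (k+1) * istar Lrn xs k T B + (run Lrn xs k (tstar Lrn xs k T B)).pc
      + (run Lrn xs k (tstar Lrn xs k T B)).zc
      ≤ mistakesC X Lrn (xF Lrn xs k T B) (yF Lrn xs k T B) T := by
  classical
  have histar : istar Lrn xs k T B = (run Lrn xs k (tstar Lrn xs k T B)).seg := rfl
  set tst := tstar Lrn xs k T B with htst
  set S1 := (Finset.range tst).filter (fun r => pr Lrn xs k r = true) with hS1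
  set S2 := (Finset.range tst).filter
      (fun r => (run Lrn xs k r).seg = (run Lrn xs k tst).seg ∧ pr Lrn xs k r = false) with hS2
  have hdisj : Disjoint S1 S2 := by
    rw [Finset.disjoint_left]
    intro a ha hb
    have h1 := (Finset.mem_filter.mp ha).2
    have h2 := (Finset.mem_filter.mp hb).2.2
    rw [h1] at h2; cases h2
  have hsub : S1 ∪ S2 ⊆ (Finset.range T).filter
      (fun t => predC X Lrn (xF Lrn xs k T B) (yF Lrn xs k T B) t ≠ yF Lrn xs k T B t) := by
    intro t htmem
    have htlt : t < tst := by
      rcases Finset.mem_union.mp htmem with hm | hm <;>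
        exact Finset.mem_range.mp (Finset.mem_filter.mp hm).1
    have htT : t < T := (tstar_min Lrn xs k T B t htlt).1
    rw [Finset.mem_filter, Finset.mem_range]
    refine ⟨htT, ?_⟩
    rw [predF_eq Lrn xs k T B t htlt]
    rcases Finset.mem_union.mp htmem with hm | hm
    · have hp := (Finset.mem_filter.mp hm).2
      rw [hp]
      simp only [yF, if_pos htlt, histar, ← htst]
      rw [if_neg (by rintro ⟨-, h2⟩; rw [hp] at h2; cases h2)]
      simp
    · have hp := (Finset.mem_filter.mp hm).2
      rw [hp.2]
      simp only [yF, if_pos htlt, histar]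
      rw [if_pos hp]
      simp
  have hcard : S1.card + S2.card ≤ mistakesC X Lrn (xF Lrn xs k T B) (yF Lrn xs k T B) T := by
    rw [← Finset.card_union_of_disjoint hdisj]
    exact Finset.card_le_card hsub
  have hc1 : S1.card = (k+1) * (run Lrn xs k tst).seg + (run Lrn xs k tst).pc :=
    count_pred Lrn xs k tst
  have hc2 : (run Lrn xs k tst).zc ≤ S2.card := zc_le_count Lrn xs k tst
  rw [histar]
  omega

/-- the chosen branch hypothesis disagrees with the labels at most `k` times -/
lemma disag_le (h : X → Bool)
    (h1 : h (xs (istar Lrn xs k T B)) = true)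
    (h2 : ∀ j < istar Lrn xs k T B, h (xs j) = false) :
    ((Finset.range T).filter
      (fun t => h (xF Lrn xs k T B t) ≠ yF Lrn xs k T B t)).card ≤ k := by
  classical
  have histar : istar Lrn xs k T B = (run Lrn xs k (tstar Lrn xs k T B)).seg := rfl
  have hsub : (Finset.range T).filter
      (fun t => h (xF Lrn xs k T B t) ≠ yF Lrn xs k T B t)
      ⊆ (Finset.range (tstar Lrn xs k T B)).filter
        (fun r => (run Lrn xs k r).seg = (run Lrn xs k (tstar Lrn xs k T B)).seg
          ∧ pr Lrn xs k r = true) := by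
    intro t htmem
    have hne := (Finset.mem_filter.mp htmem).2
    by_cases ht : t < tstar Lrn xs k T B
    · have hsegle : (run Lrn xs k t).seg ≤ istar Lrn xs k T B := by
        rw [histar]; exact seg_mono Lrn xs k ht.le
      have hx : xF Lrn xs k T B t = xs (run Lrn xs k t).seg := by
        simp only [xF, if_pos ht]
      rcases lt_or_eq_of_le hsegle with hlt | heq
      · exfalso
        apply hne
        rw [hx, h2 _ hlt]
        simp only [yF, if_pos ht]
        rw [if_neg (by rintro ⟨hc, -⟩; omega)]
      · cases hp : pr Lrn xs k t with
        | true =>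
            rw [Finset.mem_filter, Finset.mem_range]
            refine ⟨ht, ?_, hp⟩
            rw [← histar]; exact heq
        | false =>
            exfalso
            apply hne
            rw [hx, heq, h1]
            simp only [yF, if_pos ht]
            rw [if_pos ⟨heq, hp⟩]
    · exfalso
      apply hne
      have hx : xF Lrn xs k T B t = xs (istar Lrn xs k T B) := by
        simp only [xF, if_neg ht]
      rw [hx, h1]
      simp only [yF, if_neg ht]
  exact le_trans (Finset.card_le_card hsub)
    (le_trans (count_seg_pred_le_pc Lrn xs k _) (pc_le Lrn xs k _))

/-- completed segments account for at most `T` predict-1 rounds -/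
lemma budget_le_T :
    (k+1) * istar Lrn xs k T B + (run Lrn xs k (tstar Lrn xs k T B)).pc ≤ T := by
  have h1 := count_pred Lrn xs k (tstar Lrn xs k T B)
  have h2 : ((Finset.range (tstar Lrn xs k T B)).filter
      (fun r => pr Lrn xs k r = true)).card ≤ tstar Lrn xs k T B := by
    calc _ ≤ (Finset.range (tstar Lrn xs k T B)).card := Finset.card_filter_le _ _
    _ = _ := Finset.card_range _
  have h3 := tstar_le Lrn xs k T B
  unfold istar
  omega

end W1LB

/-- If `w(H) > 1` (equivalently, `H` shatters width-1 trees of arbitrary depth), then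
`M*(H,T,k) = Ω(√(T(k+1)))` for all `k ≤ T`: every deterministic apple tasting learner
makes at least `c·√(T(k+1))` mistakes on some `k`-realizable sequence of length `T`. -/
theorem wide_class_lower_bound :
    ∃ c : ℝ, 0 < c ∧
      ∀ (X : Type) (H : Set (X → Bool)), (∀ d : ℕ, W1Shatters H d) →
        ∀ T k : ℕ, k ≤ T →
          ∀ Lrn : ConceptLearner X, ∃ (x : ℕ → X) (y : ℕ → Bool),
            (∃ h ∈ H, ((Finset.range T).filter (fun t => h (x t) ≠ y t)).card ≤ k) ∧
            c * Real.sqrt (T * (k + 1)) ≤ (mistakesC X Lrn x y T : ℝ) := by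
  refine ⟨1/3, by norm_num, ?_⟩
  intro X H hShat T k hkT Lrn
  obtain ⟨xs, hs, hbr⟩ := W1LB.branch_exists (hShat (T+1)) (Nat.succ_pos T)
  set s := Nat.sqrt (T * (k+1)) with hs_def
  set B := s + 1 with hB_def
  set tst := W1LB.tstar Lrn xs k T B with htst_def
  set ist := W1LB.istar Lrn xs k T B with hist_def
  set M := mistakesC X Lrn (W1LB.xF Lrn xs k T B) (W1LB.yF Lrn xs k T B) T with hM_def
  have hmge : (k+1) * ist + (W1LB.run Lrn xs k tst).pc + (W1LB.run Lrn xs k tst).zc ≤ M :=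
    W1LB.mistakes_ge Lrn xs k T B
  have hpcle : (W1LB.run Lrn xs k tst).pc ≤ k := W1LB.pc_le Lrn xs k tst
  have hmge' : (k+1) * (W1LB.run Lrn xs k tst).seg + (W1LB.run Lrn xs k tst).pc
      + (W1LB.run Lrn xs k tst).zc ≤ M := hmge
  have histT : ist ≤ T := by
    have h5 : (k+1) * ist + (W1LB.run Lrn xs k tst).pc ≤ T :=
      W1LB.budget_le_T Lrn xs k T B
    have h4 : ist ≤ (k+1) * ist := Nat.le_mul_of_pos_left ist (Nat.succ_pos k)
    omega
  obtain ⟨hmem, htrue, hfalse⟩ := hbr ist (by omega)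
  refine ⟨W1LB.xF Lrn xs k T B, W1LB.yF Lrn xs k T B,
    ⟨hs ist, hmem, W1LB.disag_le Lrn xs k T B (hs ist) htrue hfalse⟩, ?_⟩
  -- the key combinatorial estimate
  have hkey : T * (k+1) ≤ 9 * M^2 := by
    rcases W1LB.tstar_spec Lrn xs k T B with hT | hz
    · -- case: the horizon was reached; use the time bound
      have htT : tst = T := le_antisymm (W1LB.tstar_le Lrn xs k T B) hT
      have htb : tst ≤ (W1LB.run Lrn xs k tst).seg * (B+k) + (W1LB.run Lrn xs k tst).pc
          + (W1LB.run Lrn xs k tst).zc := W1LB.time_bound Lrn xs k B tst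
        (fun r hr => (W1LB.tstar_min Lrn xs k T B r hr).2)
      have htb2 : T ≤ (W1LB.run Lrn xs k tst).seg * (B+k) + (W1LB.run Lrn xs k tst).pc
          + (W1LB.run Lrn xs k tst).zc := le_trans hT htb
      rcases Nat.eq_zero_or_pos s with hs0 | hs1
      · have hlt := Nat.lt_succ_sqrt (T*(k+1))
        rw [← hs_def, hs0] at hlt
        norm_num at hlt
        rw [hlt]
        simp
      · have hks : k ≤ s := by
          rw [hs_def]
          exact Nat.le_sqrt.mpr (le_trans (Nat.mul_le_mul hkT le_rfl)
            (Nat.mul_le_mul le_rfl (Nat.le_succ k)))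
        have hss : s * s ≤ T * (k+1) := by rw [hs_def]; exact Nat.sqrt_le _
        have e1 : T * (k+1) ≤ (B+k) * M := by
          calc T * (k+1)
              ≤ ((W1LB.run Lrn xs k tst).seg * (B+k) + (W1LB.run Lrn xs k tst).pc
                  + (W1LB.run Lrn xs k tst).zc) * (k+1) := Nat.mul_le_mul htb2 le_rfl
            _ = (k+1) * (W1LB.run Lrn xs k tst).seg * (B+k)
                + ((W1LB.run Lrn xs k tst).pc + (W1LB.run Lrn xs k tst).zc) * (k+1) := by ring
            _ ≤ (k+1) * (W1LB.run Lrn xs k tst).seg * (B+k)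
                + ((W1LB.run Lrn xs k tst).pc + (W1LB.run Lrn xs k tst).zc) * (B+k) := by
                  exact Nat.add_le_add_left (Nat.mul_le_mul le_rfl (by omega)) _
            _ = ((k+1) * (W1LB.run Lrn xs k tst).seg
                + ((W1LB.run Lrn xs k tst).pc + (W1LB.run Lrn xs k tst).zc)) * (B+k) := by ring
            _ ≤ M * (B+k) := by
                  refine Nat.mul_le_mul ?_ le_rfl
                  omega
            _ = (B+k) * M := Nat.mul_comm _ _
        have e2 : B + k ≤ 3 * s := by omega
        have e3 : T * (k+1) ≤ 3 * s * M := le_trans e1 (Nat.mul_le_mul e2 le_rfl)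
        have e5 : s ≤ 3 * M := by
          have e4 : s * s ≤ s * (3 * M) := by
            calc s * s ≤ T * (k+1) := hss
            _ ≤ 3 * s * M := e3
            _ = s * (3 * M) := by ring
          exact Nat.le_of_mul_le_mul_left e4 hs1
        calc T * (k+1) ≤ 3 * s * M := e3
          _ ≤ 3 * (3 * M) * M := Nat.mul_le_mul (Nat.mul_le_mul le_rfl e5) le_rfl
          _ = 9 * M^2 := by ring
    · -- case: the final segment has B predict-0 rounds, all mistakes
      have hBM : B ≤ M := le_trans hz (le_trans (Nat.le_add_left _ _) hmge)
      have hlt := Nat.lt_succ_sqrt (T*(k+1))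
      rw [← hs_def] at hlt
      have h1 : (s+1) * (s+1) ≤ M * M := Nat.mul_le_mul (by omega) (by omega)
      have h2 : T * (k+1) ≤ M * M := by
        have : Nat.succ s = s + 1 := rfl
        rw [this] at hlt
        omega
      calc T * (k+1) ≤ M * M := h2
        _ ≤ 9 * M^2 := by nlinarith
  -- conclude over the reals
  have hcast : ((T * (k+1) : ℕ) : ℝ) ≤ ((9 * M^2 : ℕ) : ℝ) := Nat.cast_le.mpr hkey
  push_cast at hcast
  have hR : (T:ℝ) * ((k:ℝ)+1) ≤ (3*(M:ℝ))^2 := by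
    calc (T:ℝ) * ((k:ℝ)+1) ≤ 9 * (M:ℝ)^2 := hcast
    _ = (3*(M:ℝ))^2 := by ring
  have hsq : Real.sqrt ((T:ℝ)*((k:ℝ)+1)) ≤ 3*(M:ℝ) := by
    calc Real.sqrt ((T:ℝ)*((k:ℝ)+1)) ≤ Real.sqrt ((3*(M:ℝ))^2) := Real.sqrt_le_sqrt hR
    _ = 3*(M:ℝ) := Real.sqrt_sq (by positivity)
  linarith
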